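/- Let P = B ∪ R be a doubly collinear point set with |B| = |R| = n. For r ∈ R and b ∈ B, the edge {r,b} is feasible (contained in some bichromatic perfect non-crossing matching of P) if and only if |P ∩ (r,x)| ≤ |P ∩ (b→x→)| and |P ∩ (b,x)| ≤ |P ∩ (r→x→)|, where (p,x) denotes the open segment between p and x, and (p→x→) denotes the open half-line of the line containing p that starts at p and contains x. -/

import Mathlib

noncomputable section

open scoped InnerProductSpace

/-- The Euclidean plane. -/
abbrev Pt : Type := EuclideanSpace ℝ (Fin 2)

/-- The determinant of two plane vectors (twice the signed area). -/
def det2 (u v : Pt) : ℝ := u 0 * v 1 - u 1 * v 0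

/-- The open half-line starting at `x` with direction `u`. -/
def halfLine (x u : Pt) : Set Pt := {y | ∃ t : ℝ, 0 < t ∧ y = x + t • u}

/-- The open half-line starting at `a` and passing through `c` (it contains `c`). -/
def rayThrough (a c : Pt) : Set Pt := {y | ∃ s : ℝ, 0 < s ∧ y = a + s • (c - a)}

/-- `σ` encodes a bichromatic perfect non-crossing matching of the blue points `B` and the red
points `R`: it restricts to a bijection from `R` onto `B`, and the closed segments induced by
two distinct edges are disjoint. -/
def IsBM (B R : Finset Pt) (σ : Pt → Pt) : Prop :=
  Set.BijOn σ (↑R) (↑B) ∧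
  (∀ r ∈ R, ∀ r' ∈ R, r ≠ r' →
    segment ℝ r (σ r) ∩ segment ℝ r' (σ r') = ∅)

/-- The bichromatic edge `{r, b}` is feasible: some bichromatic perfect non-crossing matching
of `B ∪ R` contains it. -/
def BFeasible (B R : Finset Pt) (r b : Pt) : Prop :=
  ∃ σ, IsBM B R σ ∧ σ r = b

section Helpers
open Finset


abbrev Nc (a b a' b' : ℝ) : Prop := a*a' > 0 → b*b' > 0 → (|a| < |a'| ↔ |b| < |b'|)

lemma abs_ne_of (a a' : ℝ) (h : a*a' > 0) (hne : a ≠ a') : |a| ≠ |a'| := by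
  intro he
  rcases abs_eq_abs.mp he with h1 | h1
  · exact hne h1
  · rw [h1] at h; nlinarith [sq_nonneg a']

lemma Nc_symm {a b a' b' : ℝ} (ha : a ≠ a') (hb : b ≠ b') (h : Nc a b a' b') :
    Nc a' b' a b := by
  intro h1 h2
  have h1' : a*a' > 0 := by nlinarith
  have h2' : b*b' > 0 := by nlinarith
  have hiff := h h1' h2'
  have hA := abs_ne_of a a' h1' ha
  have hB := abs_ne_of b b' h2' hb
  constructor
  · intro hlt
    have : ¬ (|a| < |a'|) := not_lt.mpr hlt.le
    have hble : |b'| ≤ |b| := not_lt.mp (fun hh => this (hiff.mpr hh))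
    exact lt_of_le_of_ne hble (fun hh => hB hh.symm)
  · intro hlt
    have : ¬ (|b| < |b'|) := not_lt.mpr hlt.le
    have hale : |a'| ≤ |a| := not_lt.mp (fun hh => this (hiff.mp hh))
    exact lt_of_le_of_ne hale (fun hh => hA hh.symm)

lemma extend_matching (S T : Finset ℝ) (s' t' : ℝ) (hs' : s' ∉ S) (ht' : t' ∉ T)
    (f : ℝ → ℝ) (hbij : Set.BijOn f ↑S ↑T)
    (hnc : ∀ a ∈ S, ∀ a' ∈ S, a ≠ a' → Nc a (f a) a' (f a'))
    (hcompat : ∀ a ∈ S, Nc s' t' a (f a)) :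
    ∃ g : ℝ → ℝ, Set.BijOn g ↑(insert s' S) ↑(insert t' T) ∧
      (∀ a ∈ S, g a = f a) ∧ g s' = t' ∧
      ∀ a ∈ insert s' S, ∀ a' ∈ insert s' S, a ≠ a' → Nc a (g a) a' (g a') := by
  classical
  refine ⟨Function.update f s' t', ?_, ?_, ?_, ?_⟩
  · constructor
    · intro a ha
      simp only [Finset.coe_insert, Set.mem_insert_iff] at ha ⊢
      rcases ha with rfl | ha
      · left; simp [Function.update_self]
      · right
        rw [Function.update_of_ne (ne_of_mem_of_not_mem ha hs')]
        exact hbij.mapsTo ha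
    constructor
    · intro a ha a' ha' hgg
      simp only [Finset.coe_insert, Set.mem_insert_iff] at ha ha'
      rcases ha with rfl | ha <;> rcases ha' with rfl | ha'
      · rfl
      · rw [Function.update_self, Function.update_of_ne (ne_of_mem_of_not_mem ha' hs')] at hgg
        exact absurd (hgg ▸ hbij.mapsTo ha') ht'
      · rw [Function.update_self, Function.update_of_ne (ne_of_mem_of_not_mem ha hs')] at hgg
        exact absurd (hgg.symm ▸ hbij.mapsTo ha) ht'
      · rw [Function.update_of_ne (ne_of_mem_of_not_mem ha hs'),
          Function.update_of_ne (ne_of_mem_of_not_mem ha' hs')] at hgg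
        exact hbij.injOn ha ha' hgg
    · intro b hb
      simp only [Finset.coe_insert, Set.mem_insert_iff] at hb
      rcases hb with rfl | hb
      · exact ⟨s', by simp, by simp [Function.update_self]⟩
      · obtain ⟨a, ha, rfl⟩ := hbij.surjOn hb
        exact ⟨a, by simp [ha], by
          rw [Function.update_of_ne (ne_of_mem_of_not_mem ha hs')]⟩
  · intro a ha
    rw [Function.update_of_ne (ne_of_mem_of_not_mem ha hs')]
  · simp [Function.update_self]
  · intro a ha a' ha' hne
    simp only [Finset.mem_insert] at ha ha'
    have key : ∀ c ∈ S, Nc s' (Function.update f s' t' s') c (Function.update f s' t' c) := by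
      intro c hc
      rw [Function.update_self, Function.update_of_ne (ne_of_mem_of_not_mem hc hs')]
      exact hcompat c hc
    rcases ha with rfl | ha <;> rcases ha' with rfl | ha'
    · exact absurd rfl hne
    · exact key a' ha'
    · have h1 := key a ha
      rw [Function.update_self] at h1 ⊢
      rw [Function.update_of_ne (ne_of_mem_of_not_mem ha hs')] at h1 ⊢
      exact Nc_symm (Ne.symm hne) (fun hh => ht' (hh ▸ hbij.mapsTo ha)) h1
    · rw [Function.update_of_ne (ne_of_mem_of_not_mem ha hs'),
        Function.update_of_ne (ne_of_mem_of_not_mem ha' hs')]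
      exact hnc a ha a' ha' hne


lemma filter_lt_one_split (S : Finset ℝ) (h0 : (0:ℝ) ∉ S) :
    (S.filter (fun a => a < 1)).card
      = (S.filter (fun a => a < 0)).card + (S.filter (fun a => 0 < a ∧ a < 1)).card := by
  classical
  rw [← Finset.card_union_of_disjoint]
  · congr 1
    ext a
    simp only [mem_union, mem_filter]
    constructor
    · rintro ⟨ha, h1⟩
      rcases lt_trichotomy a 0 with h | h | h
      · exact Or.inl ⟨ha, h⟩
      · exact absurd (h ▸ ha) h0
      · exact Or.inr ⟨ha, h, h1⟩
    · rintro (⟨ha, h⟩ | ⟨ha, h, h1⟩)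
      · exact ⟨ha, by linarith⟩
      · exact ⟨ha, h1⟩
  · rw [Finset.disjoint_left]
    rintro a ha hb
    simp only [mem_filter] at ha hb
    linarith [ha.2, hb.2.1]

lemma card_split_one (S : Finset ℝ) (h0 : (0:ℝ) ∉ S) (h1 : (1:ℝ) ∈ S) :
    S.card = (S.filter (fun a => a < 0)).card + (S.filter (fun a => 0 < a ∧ a < 1)).card
      + 1 + (S.filter (fun a => 1 < a)).card := by
  classical
  have key := Finset.card_filter_add_card_filter_not (s := S) (p := fun a => a < 1)
  rw [filter_lt_one_split S h0] at key
  have h2 : S.filter (fun a => ¬ a < 1) = insert 1 (S.filter (fun a => 1 < a)) := by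
    ext a
    simp only [mem_filter, mem_insert, not_lt]
    constructor
    · rintro ⟨ha, hle⟩
      rcases eq_or_lt_of_le hle with h | h
      · exact Or.inl h.symm
      · exact Or.inr ⟨ha, h⟩
    · rintro (rfl | ⟨ha, h⟩)
      · exact ⟨h1, le_refl _⟩
      · exact ⟨ha, h.le⟩
  have h3 : (1:ℝ) ∉ S.filter (fun a => 1 < a) := by
    simp only [mem_filter]; rintro ⟨-, h⟩; linarith
  rw [h2, Finset.card_insert_of_notMem h3] at key
  omega





/-- Gluing step: from a matching on the erased sets plus a universally compatible
new edge `(s', t')`, get a matching on the full sets. -/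
lemma comb_step {S T : Finset ℝ} {s' t' : ℝ}
    (h1S : (1:ℝ) ∈ S)
    (hs'S : s' ∈ S) (ht'T : t' ∈ T) (hs'1 : s' ≠ 1)
    (hrec : ∃ f, Set.BijOn f ↑(S.erase s') ↑(T.erase t') ∧ f 1 = 1 ∧
        ∀ a ∈ S.erase s', ∀ a' ∈ S.erase s', a ≠ a' → Nc a (f a) a' (f a'))
    (hcompat : ∀ f : ℝ → ℝ, Set.BijOn f ↑(S.erase s') ↑(T.erase t') → f 1 = 1 →
        ∀ a ∈ S.erase s', Nc s' t' a (f a)) :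
    ∃ f, Set.BijOn f ↑S ↑T ∧ f 1 = 1 ∧
      ∀ a ∈ S, ∀ a' ∈ S, a ≠ a' → Nc a (f a) a' (f a') := by
  obtain ⟨f, hbij, hf1, hnc⟩ := hrec
  obtain ⟨g, hgbij, hgf, hgs', hgnc⟩ := extend_matching (S.erase s') (T.erase t') s' t'
    (Finset.notMem_erase _ _) (Finset.notMem_erase _ _) f hbij hnc
    (hcompat f hbij hf1)
  rw [Finset.insert_erase hs'S, Finset.insert_erase ht'T] at hgbij
  rw [Finset.insert_erase hs'S] at hgnc
  have h1e : (1:ℝ) ∈ S.erase s' := Finset.mem_erase.mpr ⟨Ne.symm hs'1, h1S⟩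
  refine ⟨g, hgbij, ?_, hgnc⟩
  rw [hgf 1 h1e, hf1]







lemma nlt_pos {a s : ℝ} (ha : 0 < a) (h : a ≤ s) : ¬ (|s| < |a|) := by
  rw [abs_of_pos ha, abs_of_pos (lt_of_lt_of_le ha h)]; linarith

lemma nlt_neg {a s : ℝ} (ha : a < 0) (h : s ≤ a) : ¬ (|s| < |a|) := by
  rw [abs_of_neg ha, abs_of_neg (lt_of_le_of_lt h ha)]; linarith

lemma pos_pos {s a : ℝ} (hs : 0 < s) (h : 0 < s * a) : 0 < a := by
  rcases mul_pos_iff.mp h with ⟨_, h2⟩ | ⟨h1, _⟩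
  · exact h2
  · linarith

lemma neg_neg'' {s a : ℝ} (hs : s < 0) (h : 0 < s * a) : a < 0 := by
  rcases mul_pos_iff.mp h with ⟨h1, _⟩ | ⟨_, h2⟩
  · linarith
  · exact h2

lemma comb : ∀ (n : ℕ) (S T : Finset ℝ), S.card = n → T.card = n →
    (0:ℝ) ∉ S → (0:ℝ) ∉ T → (1:ℝ) ∈ S → (1:ℝ) ∈ T →
    (S.filter (fun a => 0 < a ∧ a < 1)).card ≤ (T.filter (fun a => a < 1)).card →
    (T.filter (fun a => 0 < a ∧ a < 1)).card ≤ (S.filter (fun a => a < 1)).card →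
    ∃ f : ℝ → ℝ, Set.BijOn f ↑S ↑T ∧ f 1 = 1 ∧
      ∀ a ∈ S, ∀ a' ∈ S, a ≠ a' → Nc a (f a) a' (f a') := by
  intro n
  induction n using Nat.strong_induction_on with
  | _ n IH =>
  intro S T hS hT h0S h0T h1S h1T I1 I2
  classical
  rcases Nat.lt_or_ge n 2 with hn2 | hn2
  · -- base case : n = 1
    have hn1 : n = 1 := by
      have : 0 < S.card := Finset.card_pos.mpr ⟨1, h1S⟩
      omega
    have hSe : S = {1} := by
      rw [hn1] at hS
      obtain ⟨a, ha⟩ := Finset.card_eq_one.mp hS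
      rw [ha] at h1S ⊢
      simp only [Finset.mem_singleton] at h1S
      rw [h1S]
    have hTe : T = {1} := by
      rw [hn1] at hT
      obtain ⟨a, ha⟩ := Finset.card_eq_one.mp hT
      rw [ha] at h1T ⊢
      simp only [Finset.mem_singleton] at h1T
      rw [h1T]
    refine ⟨fun _ => 1, ?_, rfl, ?_⟩
    · rw [hSe, hTe]
      constructor
      · intro a _; simp
      constructor
      · intro a ha a' ha' _
        simp only [Finset.coe_singleton, Set.mem_singleton_iff] at ha ha'
        rw [ha, ha']
      · intro b hb
        simp only [Finset.coe_singleton, Set.mem_singleton_iff] at hb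
        exact ⟨1, by simp [hb]⟩
    · intro a ha a' ha' hne
      rw [hSe] at ha ha'
      simp only [Finset.mem_singleton] at ha ha'
      exact absurd (ha.trans ha'.symm) hne
  · -- inductive step
    have sS := card_split_one S h0S h1S
    have sT := card_split_one T h0T h1T
    have fS := filter_lt_one_split S h0S
    have fT := filter_lt_one_split T h0T
    have hSPne : (S.filter fun a => 0 < a).Nonempty :=
      ⟨1, Finset.mem_filter.mpr ⟨h1S, one_pos⟩⟩
    have hTPne : (T.filter fun a => 0 < a).Nonempty :=
      ⟨1, Finset.mem_filter.mpr ⟨h1T, one_pos⟩⟩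
    -- a generic applier
    have MAIN : ∀ s' t' : ℝ, s' ∈ S → t' ∈ T → s' ≠ 1 → t' ≠ 1 →
        (((S.erase s').filter (fun a => 0 < a ∧ a < 1)).card ≤
          ((T.erase t').filter (fun a => a < 1)).card) →
        (((T.erase t').filter (fun a => 0 < a ∧ a < 1)).card ≤
          ((S.erase s').filter (fun a => a < 1)).card) →
        (∀ f : ℝ → ℝ, Set.BijOn f ↑(S.erase s') ↑(T.erase t') → f 1 = 1 →
          ∀ a ∈ S.erase s', Nc s' t' a (f a)) →
        ∃ f, Set.BijOn f ↑S ↑T ∧ f 1 = 1 ∧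
          ∀ a ∈ S, ∀ a' ∈ S, a ≠ a' → Nc a (f a) a' (f a') := by
      intro s' t' hs'S ht'T hs'1 ht'1 inv1 inv2 hcompat
      exact comb_step h1S hs'S ht'T hs'1
        (IH (n-1) (by omega) (S.erase s') (T.erase t')
          (by rw [Finset.card_erase_of_mem hs'S, hS])
          (by rw [Finset.card_erase_of_mem ht'T, hT])
          (fun h => h0S (Finset.mem_of_mem_erase h))
          (fun h => h0T (Finset.mem_of_mem_erase h))
          (Finset.mem_erase.mpr ⟨Ne.symm hs'1, h1S⟩)
          (Finset.mem_erase.mpr ⟨Ne.symm ht'1, h1T⟩)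
          inv1 inv2) hcompat
    -- facts about membership of f-values, used in compat proofs
    rcases (S.filter fun a => 1 < a).eq_empty_or_nonempty with hORe | hORne <;>
      rcases (T.filter fun a => 1 < a).eq_empty_or_nonempty with hOBe | hOBne
    · -- case d : no outer points on either side
      have hORe' : (S.filter fun a => 1 < a).card = 0 := by rw [hORe]; simp
      have hOBe' : (T.filter fun a => 1 < a).card = 0 := by rw [hOBe]; simp
      have hnogtS : ∀ a ∈ S, ¬ (1:ℝ) < a := by
        intro a ha h
        have : a ∈ S.filter fun x => 1 < x := Finset.mem_filter.mpr ⟨ha, h⟩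
        rw [hORe] at this
        exact Finset.notMem_empty a this
      have hnogtT : ∀ a ∈ T, ¬ (1:ℝ) < a := by
        intro a ha h
        have : a ∈ T.filter fun x => 1 < x := Finset.mem_filter.mpr ⟨ha, h⟩
        rw [hOBe] at this
        exact Finset.notMem_empty a this
      rcases (S.filter fun a => a < 0).eq_empty_or_nonempty with hSNe | hSNne <;>
        rcases (T.filter fun a => a < 0).eq_empty_or_nonempty with hTNe | hTNne
      · -- d4 : everything in (0,1] on both sides
        have hSNe' : (S.filter fun a => a < 0).card = 0 := by rw [hSNe]; simp
        have hTNe' : (T.filter fun a => a < 0).card = 0 := by rw [hTNe]; simp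
        have hP1ne : (S.filter fun a => 0 < a ∧ a < 1).Nonempty := by
          rw [Finset.nonempty_iff_ne_empty]
          intro he
          have : (S.filter fun a => 0 < a ∧ a < 1).card = 0 := by rw [he]; simp
          omega
        have hP2ne : (T.filter fun a => 0 < a ∧ a < 1).Nonempty := by
          rw [Finset.nonempty_iff_ne_empty]
          intro he
          have : (T.filter fun a => 0 < a ∧ a < 1).card = 0 := by rw [he]; simp
          omega
        obtain ⟨s', hs'mem, hs'bound⟩ : ∃ y ∈ (S.filter fun a => 0 < a ∧ a < 1), ∀ a ∈ (S.filter fun a => 0 < a ∧ a < 1), a ≤ y :=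
          ⟨(S.filter fun a => 0 < a ∧ a < 1).max' hP1ne, Finset.max'_mem _ hP1ne, fun a ha => Finset.le_max' _ a ha⟩
        obtain ⟨t', ht'mem, ht'bound⟩ : ∃ y ∈ (T.filter fun a => 0 < a ∧ a < 1), ∀ a ∈ (T.filter fun a => 0 < a ∧ a < 1), a ≤ y :=
          ⟨(T.filter fun a => 0 < a ∧ a < 1).max' hP2ne, Finset.max'_mem _ hP2ne, fun a ha => Finset.le_max' _ a ha⟩
        have hs'S : s' ∈ S := (Finset.mem_filter.mp hs'mem).1
        have ht'T : t' ∈ T := (Finset.mem_filter.mp ht'mem).1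
        have hs'pos : (0:ℝ) < s' := (Finset.mem_filter.mp hs'mem).2.1
        have hs'lt1 : s' < 1 := (Finset.mem_filter.mp hs'mem).2.2
        have ht'pos : (0:ℝ) < t' := (Finset.mem_filter.mp ht'mem).2.1
        have ht'lt1 : t' < 1 := (Finset.mem_filter.mp ht'mem).2.2
        have hs'max : ∀ a ∈ S, 0 < a → a < 1 → a ≤ s' :=
          fun a ha h1 h2 => hs'bound a (Finset.mem_filter.mpr ⟨ha, h1, h2⟩)
        have ht'max : ∀ a ∈ T, 0 < a → a < 1 → a ≤ t' :=
          fun a ha h1 h2 => ht'bound a (Finset.mem_filter.mpr ⟨ha, h1, h2⟩)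
        refine MAIN s' t' hs'S ht'T (by linarith) (by linarith) ?_ ?_ ?_
        · rw [Finset.filter_erase, Finset.filter_erase,
            Finset.card_erase_of_mem hs'mem,
            Finset.card_erase_of_mem (Finset.mem_filter.mpr ⟨ht'T, by linarith⟩)]
          omega
        · rw [Finset.filter_erase, Finset.filter_erase,
            Finset.card_erase_of_mem ht'mem,
            Finset.card_erase_of_mem (Finset.mem_filter.mpr ⟨hs'S, by linarith⟩)]
          omega
        · intro f hbij hf1 a ha h1 h2
          have haS := Finset.mem_erase.mp ha
          have hfa : f a ∈ (T.erase t') := by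
            have := hbij.mapsTo (Finset.mem_coe.mpr ha)
            exact Finset.mem_coe.mp this
          have hfaT := Finset.mem_erase.mp hfa
          have hapos : 0 < a := pos_pos hs'pos h1
          have hfapos : 0 < f a := pos_pos ht'pos h2
          rcases eq_or_ne a 1 with rfl | ha1
          · rw [hf1]
            rw [abs_of_pos hs'pos, abs_of_pos ht'pos, abs_one]
            exact iff_of_true hs'lt1 ht'lt1
          · have halt1 : a < 1 := lt_of_le_of_ne (not_lt.mp (hnogtS a haS.2)) ha1
            have hfa1 : f a ≠ 1 := by
              intro he
              have h1e : (1:ℝ) ∈ S.erase s' :=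
                Finset.mem_erase.mpr ⟨fun hh => by rw [← hh] at hs'lt1; linarith, h1S⟩
              exact ha1 (hbij.injOn (Finset.mem_coe.mpr ha) (Finset.mem_coe.mpr h1e)
                (by rw [he, hf1]))
            have hfalt1 : f a < 1 := lt_of_le_of_ne (not_lt.mp (hnogtT _ hfaT.2)) hfa1
            exact iff_of_false
              (nlt_pos hapos (hs'max a haS.2 hapos halt1))
              (nlt_pos hfapos (ht'max _ hfaT.2 hfapos hfalt1))
      · -- d2' : S all positive, T has negatives  (here SN = ∅, TN ≠ ∅)
        have hSNe' : (S.filter fun a => a < 0).card = 0 := by rw [hSNe]; simp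
        have hTN1 : 0 < (T.filter fun a => a < 0).card := Finset.card_pos.mpr hTNne
        have hP1ne : (S.filter fun a => 0 < a ∧ a < 1).Nonempty := by
          rw [Finset.nonempty_iff_ne_empty]
          intro he
          have : (S.filter fun a => 0 < a ∧ a < 1).card = 0 := by rw [he]; simp
          omega
        obtain ⟨s', hs'mem, hs'bound⟩ : ∃ y ∈ (S.filter fun a => 0 < a ∧ a < 1), ∀ a ∈ (S.filter fun a => 0 < a ∧ a < 1), a ≤ y :=
          ⟨(S.filter fun a => 0 < a ∧ a < 1).max' hP1ne, Finset.max'_mem _ hP1ne, fun a ha => Finset.le_max' _ a ha⟩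
        obtain ⟨t', ht'mem, ht'bound⟩ : ∃ y ∈ (T.filter fun a => a < 0), ∀ a ∈ (T.filter fun a => a < 0), y ≤ a :=
          ⟨(T.filter fun a => a < 0).min' hTNne, Finset.min'_mem _ hTNne, fun a ha => Finset.min'_le _ a ha⟩
        have hs'S : s' ∈ S := (Finset.mem_filter.mp hs'mem).1
        have ht'T : t' ∈ T := (Finset.mem_filter.mp ht'mem).1
        have hs'pos : (0:ℝ) < s' := (Finset.mem_filter.mp hs'mem).2.1
        have hs'lt1 : s' < 1 := (Finset.mem_filter.mp hs'mem).2.2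
        have ht'neg : t' < 0 := (Finset.mem_filter.mp ht'mem).2
        have hs'max : ∀ a ∈ S, 0 < a → a < 1 → a ≤ s' :=
          fun a ha h1 h2 => hs'bound a (Finset.mem_filter.mpr ⟨ha, h1, h2⟩)
        have ht'min : ∀ a ∈ T, a < 0 → t' ≤ a :=
          fun a ha h1 => ht'bound a (Finset.mem_filter.mpr ⟨ha, h1⟩)
        refine MAIN s' t' hs'S ht'T (by linarith) (by linarith) ?_ ?_ ?_
        · rw [Finset.filter_erase, Finset.filter_erase,
            Finset.card_erase_of_mem hs'mem,
            Finset.card_erase_of_mem (Finset.mem_filter.mpr ⟨ht'T, by linarith⟩)]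
          omega
        · rw [Finset.filter_erase, Finset.filter_erase,
            Finset.erase_eq_of_notMem
              (by simp only [Finset.mem_filter]; rintro ⟨-, h, -⟩; linarith),
            Finset.card_erase_of_mem (Finset.mem_filter.mpr ⟨hs'S, by linarith⟩)]
          omega
        · intro f hbij hf1 a ha h1 h2
          have haS := Finset.mem_erase.mp ha
          have hfa : f a ∈ (T.erase t') :=
            Finset.mem_coe.mp (hbij.mapsTo (Finset.mem_coe.mpr ha))
          have hfaT := Finset.mem_erase.mp hfa
          have hapos : 0 < a := pos_pos hs'pos h1
          have hfaneg : f a < 0 := neg_neg'' ht'neg h2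
          rcases eq_or_ne a 1 with rfl | ha1
          · rw [hf1] at hfaneg; linarith
          · have halt1 : a < 1 := lt_of_le_of_ne (not_lt.mp (hnogtS a haS.2)) ha1
            exact iff_of_false
              (nlt_pos hapos (hs'max a haS.2 hapos halt1))
              (nlt_neg hfaneg (ht'min _ hfaT.2 hfaneg))
      · -- d3' : S has negatives, T all positive  (SN ≠ ∅, TN = ∅)
        have hTNe' : (T.filter fun a => a < 0).card = 0 := by rw [hTNe]; simp
        have hSN1 : 0 < (S.filter fun a => a < 0).card := Finset.card_pos.mpr hSNne
        have hP2ne : (T.filter fun a => 0 < a ∧ a < 1).Nonempty := by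
          rw [Finset.nonempty_iff_ne_empty]
          intro he
          have : (T.filter fun a => 0 < a ∧ a < 1).card = 0 := by rw [he]; simp
          omega
        obtain ⟨s', hs'mem, hs'bound⟩ : ∃ y ∈ (S.filter fun a => a < 0), ∀ a ∈ (S.filter fun a => a < 0), y ≤ a :=
          ⟨(S.filter fun a => a < 0).min' hSNne, Finset.min'_mem _ hSNne, fun a ha => Finset.min'_le _ a ha⟩
        obtain ⟨t', ht'mem, ht'bound⟩ : ∃ y ∈ (T.filter fun a => 0 < a ∧ a < 1), ∀ a ∈ (T.filter fun a => 0 < a ∧ a < 1), a ≤ y :=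
          ⟨(T.filter fun a => 0 < a ∧ a < 1).max' hP2ne, Finset.max'_mem _ hP2ne, fun a ha => Finset.le_max' _ a ha⟩
        have hs'S : s' ∈ S := (Finset.mem_filter.mp hs'mem).1
        have ht'T : t' ∈ T := (Finset.mem_filter.mp ht'mem).1
        have hs'neg : s' < 0 := (Finset.mem_filter.mp hs'mem).2
        have ht'pos : (0:ℝ) < t' := (Finset.mem_filter.mp ht'mem).2.1
        have ht'lt1 : t' < 1 := (Finset.mem_filter.mp ht'mem).2.2
        have hs'min : ∀ a ∈ S, a < 0 → s' ≤ a :=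
          fun a ha h1 => hs'bound a (Finset.mem_filter.mpr ⟨ha, h1⟩)
        have ht'max : ∀ a ∈ T, 0 < a → a < 1 → a ≤ t' :=
          fun a ha h1 h2 => ht'bound a (Finset.mem_filter.mpr ⟨ha, h1, h2⟩)
        refine MAIN s' t' hs'S ht'T (by linarith) (by linarith) ?_ ?_ ?_
        · rw [Finset.filter_erase, Finset.filter_erase,
            Finset.erase_eq_of_notMem
              (by simp only [Finset.mem_filter]; rintro ⟨-, h, -⟩; linarith),
            Finset.card_erase_of_mem (Finset.mem_filter.mpr ⟨ht'T, by linarith⟩)]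
          omega
        · rw [Finset.filter_erase, Finset.filter_erase,
            Finset.card_erase_of_mem ht'mem,
            Finset.card_erase_of_mem (Finset.mem_filter.mpr ⟨hs'S, by linarith⟩)]
          omega
        · intro f hbij hf1 a ha h1 h2
          have haS := Finset.mem_erase.mp ha
          have hfa : f a ∈ (T.erase t') :=
            Finset.mem_coe.mp (hbij.mapsTo (Finset.mem_coe.mpr ha))
          have hfaT := Finset.mem_erase.mp hfa
          have haneg : a < 0 := neg_neg'' hs'neg h1
          have hfapos : 0 < f a := pos_pos ht'pos h2
          have hfa1 : f a ≠ 1 := by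
            intro he
            have h1e : (1:ℝ) ∈ S.erase s' :=
              Finset.mem_erase.mpr ⟨fun hh => by rw [← hh] at hs'neg; linarith, h1S⟩
            have : a = 1 := hbij.injOn (Finset.mem_coe.mpr ha) (Finset.mem_coe.mpr h1e)
              (by rw [he, hf1])
            linarith [this ▸ haneg]
          have hfalt1 : f a < 1 := lt_of_le_of_ne (not_lt.mp (hnogtT _ hfaT.2)) hfa1
          exact iff_of_false
            (nlt_neg haneg (hs'min a haS.2 haneg))
            (nlt_pos hfapos (ht'max _ hfaT.2 hfapos hfalt1))
      · -- d1 : negatives on both sides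
        have hSN1 : 0 < (S.filter fun a => a < 0).card := Finset.card_pos.mpr hSNne
        have hTN1 : 0 < (T.filter fun a => a < 0).card := Finset.card_pos.mpr hTNne
        obtain ⟨s', hs'mem, hs'bound⟩ : ∃ y ∈ (S.filter fun a => a < 0), ∀ a ∈ (S.filter fun a => a < 0), y ≤ a :=
          ⟨(S.filter fun a => a < 0).min' hSNne, Finset.min'_mem _ hSNne, fun a ha => Finset.min'_le _ a ha⟩
        obtain ⟨t', ht'mem, ht'bound⟩ : ∃ y ∈ (T.filter fun a => a < 0), ∀ a ∈ (T.filter fun a => a < 0), y ≤ a :=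
          ⟨(T.filter fun a => a < 0).min' hTNne, Finset.min'_mem _ hTNne, fun a ha => Finset.min'_le _ a ha⟩
        have hs'S : s' ∈ S := (Finset.mem_filter.mp hs'mem).1
        have ht'T : t' ∈ T := (Finset.mem_filter.mp ht'mem).1
        have hs'neg : s' < 0 := (Finset.mem_filter.mp hs'mem).2
        have ht'neg : t' < 0 := (Finset.mem_filter.mp ht'mem).2
        have hs'min : ∀ a ∈ S, a < 0 → s' ≤ a :=
          fun a ha h1 => hs'bound a (Finset.mem_filter.mpr ⟨ha, h1⟩)
        have ht'min : ∀ a ∈ T, a < 0 → t' ≤ a :=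
          fun a ha h1 => ht'bound a (Finset.mem_filter.mpr ⟨ha, h1⟩)
        refine MAIN s' t' hs'S ht'T (by linarith) (by linarith) ?_ ?_ ?_
        · rw [Finset.filter_erase, Finset.filter_erase,
            Finset.erase_eq_of_notMem
              (by simp only [Finset.mem_filter]; rintro ⟨-, h, -⟩; linarith),
            Finset.card_erase_of_mem (Finset.mem_filter.mpr ⟨ht'T, by linarith⟩)]
          omega
        · rw [Finset.filter_erase, Finset.filter_erase,
            Finset.erase_eq_of_notMem
              (by simp only [Finset.mem_filter]; rintro ⟨-, h, -⟩; linarith),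
            Finset.card_erase_of_mem (Finset.mem_filter.mpr ⟨hs'S, by linarith⟩)]
          omega
        · intro f hbij hf1 a ha h1 h2
          have haS := Finset.mem_erase.mp ha
          have hfa : f a ∈ (T.erase t') :=
            Finset.mem_coe.mp (hbij.mapsTo (Finset.mem_coe.mpr ha))
          have hfaT := Finset.mem_erase.mp hfa
          have haneg : a < 0 := neg_neg'' hs'neg h1
          have hfaneg : f a < 0 := neg_neg'' ht'neg h2
          exact iff_of_false
            (nlt_neg haneg (hs'min a haS.2 haneg))
            (nlt_neg hfaneg (ht'min _ hfaT.2 hfaneg))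
    · -- case c : OR = ∅, OB ≠ ∅ : pair the most negative red with the largest blue
      have hORe' : (S.filter fun a => 1 < a).card = 0 := by rw [hORe]; simp
      have hOB1 : 0 < (T.filter fun a => 1 < a).card := Finset.card_pos.mpr hOBne
      have hSNne : (S.filter fun a => a < 0).Nonempty := by
        rw [Finset.nonempty_iff_ne_empty]
        intro he
        have : (S.filter fun a => a < 0).card = 0 := by rw [he]; simp
        omega
      obtain ⟨s', hs'mem, hs'bound⟩ : ∃ y ∈ (S.filter fun a => a < 0), ∀ a ∈ (S.filter fun a => a < 0), y ≤ a :=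
        ⟨(S.filter fun a => a < 0).min' hSNne, Finset.min'_mem _ hSNne, fun a ha => Finset.min'_le _ a ha⟩
      obtain ⟨t', ht'mem, ht'bound⟩ : ∃ y ∈ (T.filter fun a => 0 < a), ∀ a ∈ (T.filter fun a => 0 < a), a ≤ y :=
        ⟨(T.filter fun a => 0 < a).max' hTPne, Finset.max'_mem _ hTPne, fun a ha => Finset.le_max' _ a ha⟩
      have hs'S : s' ∈ S := (Finset.mem_filter.mp hs'mem).1
      have ht'T : t' ∈ T := (Finset.mem_filter.mp ht'mem).1
      have hs'neg : s' < 0 := (Finset.mem_filter.mp hs'mem).2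
      have ht'pos : (0:ℝ) < t' := (Finset.mem_filter.mp ht'mem).2
      have hs'min : ∀ a ∈ S, a < 0 → s' ≤ a :=
        fun a ha h1 => hs'bound a (Finset.mem_filter.mpr ⟨ha, h1⟩)
      have ht'max : ∀ a ∈ T, 0 < a → a ≤ t' :=
        fun a ha h1 => ht'bound a (Finset.mem_filter.mpr ⟨ha, h1⟩)
      obtain ⟨w, hw⟩ := hOBne
      have hw' := Finset.mem_filter.mp hw
      have ht'gt1 : 1 < t' := lt_of_lt_of_le hw'.2 (ht'max w hw'.1 (by linarith [hw'.2]))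
      refine MAIN s' t' hs'S ht'T (by linarith) (by linarith) ?_ ?_ ?_
      · rw [Finset.filter_erase, Finset.filter_erase,
          Finset.erase_eq_of_notMem
            (by simp only [Finset.mem_filter]; rintro ⟨-, h, -⟩; linarith),
          Finset.erase_eq_of_notMem
            (by simp only [Finset.mem_filter]; rintro ⟨-, h⟩; linarith)]
        omega
      · rw [Finset.filter_erase, Finset.filter_erase,
          Finset.erase_eq_of_notMem
            (by simp only [Finset.mem_filter]; rintro ⟨-, -, h⟩; linarith),
          Finset.card_erase_of_mem (Finset.mem_filter.mpr ⟨hs'S, by linarith⟩)]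
        omega
      · intro f hbij hf1 a ha h1 h2
        have haS := Finset.mem_erase.mp ha
        have hfa : f a ∈ (T.erase t') :=
          Finset.mem_coe.mp (hbij.mapsTo (Finset.mem_coe.mpr ha))
        have hfaT := Finset.mem_erase.mp hfa
        have haneg : a < 0 := neg_neg'' hs'neg h1
        have hfapos : 0 < f a := pos_pos ht'pos h2
        exact iff_of_false
          (nlt_neg haneg (hs'min a haS.2 haneg))
          (nlt_pos hfapos (ht'max _ hfaT.2 hfapos))
    · -- case b : OR ≠ ∅, OB = ∅ : pair the largest red with the most negative blue
      have hOBe' : (T.filter fun a => 1 < a).card = 0 := by rw [hOBe]; simp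
      have hOR1 : 0 < (S.filter fun a => 1 < a).card := Finset.card_pos.mpr hORne
      have hTNne : (T.filter fun a => a < 0).Nonempty := by
        rw [Finset.nonempty_iff_ne_empty]
        intro he
        have : (T.filter fun a => a < 0).card = 0 := by rw [he]; simp
        omega
      obtain ⟨s', hs'mem, hs'bound⟩ : ∃ y ∈ (S.filter fun a => 0 < a), ∀ a ∈ (S.filter fun a => 0 < a), a ≤ y :=
        ⟨(S.filter fun a => 0 < a).max' hSPne, Finset.max'_mem _ hSPne, fun a ha => Finset.le_max' _ a ha⟩
      obtain ⟨t', ht'mem, ht'bound⟩ : ∃ y ∈ (T.filter fun a => a < 0), ∀ a ∈ (T.filter fun a => a < 0), y ≤ a :=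
        ⟨(T.filter fun a => a < 0).min' hTNne, Finset.min'_mem _ hTNne, fun a ha => Finset.min'_le _ a ha⟩
      have hs'S : s' ∈ S := (Finset.mem_filter.mp hs'mem).1
      have ht'T : t' ∈ T := (Finset.mem_filter.mp ht'mem).1
      have hs'pos : (0:ℝ) < s' := (Finset.mem_filter.mp hs'mem).2
      have ht'neg : t' < 0 := (Finset.mem_filter.mp ht'mem).2
      have hs'max : ∀ a ∈ S, 0 < a → a ≤ s' :=
        fun a ha h1 => hs'bound a (Finset.mem_filter.mpr ⟨ha, h1⟩)
      have ht'min : ∀ a ∈ T, a < 0 → t' ≤ a :=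
        fun a ha h1 => ht'bound a (Finset.mem_filter.mpr ⟨ha, h1⟩)
      obtain ⟨w, hw⟩ := hORne
      have hw' := Finset.mem_filter.mp hw
      have hs'gt1 : 1 < s' := lt_of_lt_of_le hw'.2 (hs'max w hw'.1 (by linarith [hw'.2]))
      refine MAIN s' t' hs'S ht'T (by linarith) (by linarith) ?_ ?_ ?_
      · rw [Finset.filter_erase, Finset.filter_erase,
          Finset.erase_eq_of_notMem
            (by simp only [Finset.mem_filter]; rintro ⟨-, -, h⟩; linarith),
          Finset.card_erase_of_mem (Finset.mem_filter.mpr ⟨ht'T, by linarith⟩)]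
        omega
      · rw [Finset.filter_erase, Finset.filter_erase,
          Finset.erase_eq_of_notMem
            (by simp only [Finset.mem_filter]; rintro ⟨-, h, -⟩; linarith),
          Finset.erase_eq_of_notMem
            (by simp only [Finset.mem_filter]; rintro ⟨-, h⟩; linarith)]
        omega
      · intro f hbij hf1 a ha h1 h2
        have haS := Finset.mem_erase.mp ha
        have hfa : f a ∈ (T.erase t') :=
          Finset.mem_coe.mp (hbij.mapsTo (Finset.mem_coe.mpr ha))
        have hfaT := Finset.mem_erase.mp hfa
        have hapos : 0 < a := pos_pos hs'pos h1
        have hfaneg : f a < 0 := neg_neg'' ht'neg h2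
        exact iff_of_false
          (nlt_pos hapos (hs'max a haS.2 hapos))
          (nlt_neg hfaneg (ht'min _ hfaT.2 hfaneg))
    · -- case a : outer points on both sides : pair the two largest
      obtain ⟨s', hs'mem, hs'bound⟩ : ∃ y ∈ (S.filter fun a => 0 < a), ∀ a ∈ (S.filter fun a => 0 < a), a ≤ y :=
        ⟨(S.filter fun a => 0 < a).max' hSPne, Finset.max'_mem _ hSPne, fun a ha => Finset.le_max' _ a ha⟩
      obtain ⟨t', ht'mem, ht'bound⟩ : ∃ y ∈ (T.filter fun a => 0 < a), ∀ a ∈ (T.filter fun a => 0 < a), a ≤ y :=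
        ⟨(T.filter fun a => 0 < a).max' hTPne, Finset.max'_mem _ hTPne, fun a ha => Finset.le_max' _ a ha⟩
      have hs'S : s' ∈ S := (Finset.mem_filter.mp hs'mem).1
      have ht'T : t' ∈ T := (Finset.mem_filter.mp ht'mem).1
      have hs'pos : (0:ℝ) < s' := (Finset.mem_filter.mp hs'mem).2
      have ht'pos : (0:ℝ) < t' := (Finset.mem_filter.mp ht'mem).2
      have hs'max : ∀ a ∈ S, 0 < a → a ≤ s' :=
        fun a ha h1 => hs'bound a (Finset.mem_filter.mpr ⟨ha, h1⟩)
      have ht'max : ∀ a ∈ T, 0 < a → a ≤ t' :=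
        fun a ha h1 => ht'bound a (Finset.mem_filter.mpr ⟨ha, h1⟩)
      obtain ⟨w, hw⟩ := hORne
      have hw' := Finset.mem_filter.mp hw
      have hs'gt1 : 1 < s' := lt_of_lt_of_le hw'.2 (hs'max w hw'.1 (by linarith [hw'.2]))
      obtain ⟨w2, hw2⟩ := hOBne
      have hw2' := Finset.mem_filter.mp hw2
      have ht'gt1 : 1 < t' := lt_of_lt_of_le hw2'.2 (ht'max w2 hw2'.1 (by linarith [hw2'.2]))
      refine MAIN s' t' hs'S ht'T (by linarith) (by linarith) ?_ ?_ ?_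
      · rw [Finset.filter_erase, Finset.filter_erase,
          Finset.erase_eq_of_notMem
            (by simp only [Finset.mem_filter]; rintro ⟨-, -, h⟩; linarith),
          Finset.erase_eq_of_notMem
            (by simp only [Finset.mem_filter]; rintro ⟨-, h⟩; linarith)]
        exact I1
      · rw [Finset.filter_erase, Finset.filter_erase,
          Finset.erase_eq_of_notMem
            (by simp only [Finset.mem_filter]; rintro ⟨-, -, h⟩; linarith),
          Finset.erase_eq_of_notMem
            (by simp only [Finset.mem_filter]; rintro ⟨-, h⟩; linarith)]
        exact I2
      · intro f hbij hf1 a ha h1 h2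
        have haS := Finset.mem_erase.mp ha
        have hfa : f a ∈ (T.erase t') :=
          Finset.mem_coe.mp (hbij.mapsTo (Finset.mem_coe.mpr ha))
        have hfaT := Finset.mem_erase.mp hfa
        have hapos : 0 < a := pos_pos hs'pos h1
        have hfapos : 0 < f a := pos_pos ht'pos h2
        exact iff_of_false
          (nlt_pos hapos (hs'max a haS.2 hapos))
          (nlt_pos hfapos (ht'max _ hfaT.2 hfapos))

lemma param_inj (x u v : Pt) (hd : det2 u v ≠ 0) {t s t' s' : ℝ}
    (h : x + t • u + s • v = x + t' • u + s' • v) : t = t' ∧ s = s' := by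
  have h0 := congrArg (fun p : Pt => p 0) h
  have h1 := congrArg (fun p : Pt => p 1) h
  simp only [PiLp.add_apply, PiLp.smul_apply, smul_eq_mul] at h0 h1
  have ht : (t - t') * det2 u v = 0 := by
    simp only [det2]; linear_combination (v 1) * h0 - (v 0) * h1
  have hs : (s - s') * det2 u v = 0 := by
    simp only [det2]; linear_combination (u 0) * h1 - (u 1) * h0
  constructor
  · have := mul_eq_zero.mp ht
    rcases this with h | h
    · linarith
    · exact absurd h hd
  · rcases mul_eq_zero.mp hs with h | h
    · linarith
    · exact absurd h hd

lemma mem_seg_iff (x u v : Pt) (s t : ℝ) (p : Pt) :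
    p ∈ segment ℝ (x + s • v) (x + t • u) ↔
      ∃ μ : ℝ, 0 ≤ μ ∧ μ ≤ 1 ∧ p = x + (μ*t) • u + ((1-μ)*s) • v := by
  constructor
  · rintro ⟨a, b, ha, hb, hab, rfl⟩
    refine ⟨b, hb, by linarith, ?_⟩
    have haa : a = 1 - b := by linarith
    rw [haa]
    match_scalars <;> ring
  · rintro ⟨μ, h0, h1, rfl⟩
    refine ⟨1 - μ, μ, by linarith, h0, by ring, ?_⟩
    match_scalars <;> ring

/-- Nested same-quadrant edges are disjoint: the real-number core. -/
lemma core_pos {s1 t1 s2 t2 μ lam : ℝ}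
    (hμ0 : 0 ≤ μ) (hμ1 : μ ≤ 1) (hl0 : 0 ≤ lam) (hl1 : lam ≤ 1)
    (hss : s1*s2 > 0) (htt : t1*t2 > 0) (hs : |s1| < |s2|) (ht : |t1| < |t2|)
    (e1 : μ*t1 = lam*t2) (e2 : (1-μ)*s1 = (1-lam)*s2) : False := by
  have hs2 : s2 ≠ 0 := by intro h; rw [h] at hss; linarith [hss]
  have ht2 : t2 ≠ 0 := by intro h; rw [h] at htt; linarith [htt]
  have habs1 : μ*|t1| = lam*|t2| := by
    have := congrArg abs e1
    rwa [abs_mul, abs_mul, abs_of_nonneg hμ0, abs_of_nonneg hl0] at this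
  have habs2 : (1-μ)*|s1| = (1-lam)*|s2| := by
    have := congrArg abs e2
    rwa [abs_mul, abs_mul, abs_of_nonneg (show (0:ℝ) ≤ 1-μ by linarith), abs_of_nonneg (show (0:ℝ) ≤ 1-lam by linarith)] at this
  have ht2pos : 0 < |t2| := abs_pos.mpr ht2
  have hs2pos : 0 < |s2| := abs_pos.mpr hs2
  rcases eq_or_lt_of_le hμ0 with h0 | h0
  · -- μ = 0
    have hlam0 : lam = 0 := by
      have : lam * |t2| = 0 := by rw [← habs1, ← h0]; ring
      rcases mul_eq_zero.mp this with h | h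
      · exact h
      · linarith
    rw [← h0, hlam0] at habs2
    simp at habs2
    linarith
  rcases eq_or_lt_of_le hμ1 with h1 | h1
  · -- μ = 1
    have hlam1 : lam = 1 := by
      have : (1 - lam) * |s2| = 0 := by rw [← habs2, h1]; ring
      rcases mul_eq_zero.mp this with h | h
      · linarith
      · linarith
    rw [h1, hlam1] at habs1
    simp at habs1
    linarith
  -- 0 < μ < 1
  have c1 : lam * |t2| < μ * |t2| := by
    rw [← habs1]
    have := abs_nonneg t1
    nlinarith
  have c2 : (1-lam) * |s2| < (1-μ) * |s2| := by
    rw [← habs2]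
    nlinarith [abs_nonneg s1]
  have hlm : lam < μ := lt_of_mul_lt_mul_right c1 ht2pos.le
  have hml : 1 - lam < 1 - μ := lt_of_mul_lt_mul_right c2 hs2pos.le
  linarith

/-- Master disjointness lemma. -/
lemma seg_disjoint (x u v : Pt) (hd : det2 u v ≠ 0) {s1 t1 s2 t2 : ℝ}
    (hs1 : s1 ≠ 0) (hs2 : s2 ≠ 0) (ht1 : t1 ≠ 0) (ht2 : t2 ≠ 0)
    (hss : s1 ≠ s2) (htt : t1 ≠ t2)
    (hnc : s1*s2 > 0 → t1*t2 > 0 → (|s1| < |s2| ↔ |t1| < |t2|)) :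
    segment ℝ (x + s1 • v) (x + t1 • u) ∩ segment ℝ (x + s2 • v) (x + t2 • u) = ∅ := by
  rw [Set.eq_empty_iff_forall_notMem]
  rintro p ⟨hp1, hp2⟩
  obtain ⟨μ, hμ0, hμ1, hpe1⟩ := (mem_seg_iff x u v s1 t1 p).mp hp1
  obtain ⟨lam, hl0, hl1, hpe2⟩ := (mem_seg_iff x u v s2 t2 p).mp hp2
  obtain ⟨e1, e2⟩ := param_inj x u v hd (hpe1 ▸ hpe2)
  -- e1 : μ*t1 = lam*t2 ; e2 : (1-μ)*s1 = (1-lam)*s2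
  rcases lt_trichotomy (s1*s2) 0 with hS | hS | hS
  · -- opposite red signs
    have key : (1-lam)*s2 = 0 := by
      have hq : 0 ≤ (1-μ)*(1-lam) := mul_nonneg (by linarith) (by linarith)
      have hp : ((1-μ)*s1) * ((1-lam)*s2) ≤ 0 := by nlinarith
      nlinarith [sq_nonneg ((1-lam)*s2)]
    have hl : lam = 1 := by
      rcases mul_eq_zero.mp key with h | h
      · linarith
      · exact absurd h hs2
    have hm : μ = 1 := by
      have e2' : (1-μ)*s1 = 0 := by rw [hl] at e2; linear_combination e2
      rcases mul_eq_zero.mp e2' with h | h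
      · linarith
      · exact absurd h hs1
    rw [hm, hl] at e1
    simp at e1
    exact htt e1
  · exact absurd hS (mul_ne_zero hs1 hs2)
  rcases lt_trichotomy (t1*t2) 0 with hT | hT | hT
  · -- opposite blue signs
    have key : lam*t2 = 0 := by
      have hq : 0 ≤ μ*lam := mul_nonneg hμ0 hl0
      have hp : (μ*t1) * (lam*t2) ≤ 0 := by nlinarith
      nlinarith [sq_nonneg (lam*t2)]
    have hl : lam = 0 := by
      rcases mul_eq_zero.mp key with h | h
      · exact h
      · exact absurd h ht2
    have hm : μ = 0 := by
      have e1' : μ*t1 = 0 := by rw [hl] at e1; linear_combination e1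
      rcases mul_eq_zero.mp e1' with h | h
      · exact h
      · exact absurd h ht1
    rw [hm, hl] at e2
    simp at e2
    exact hss e2
  · exact absurd hT (mul_ne_zero ht1 ht2)
  -- same quadrant
  have hiff := hnc hS hT
  have hAs : |s1| ≠ |s2| := by
    intro he
    rcases abs_eq_abs.mp he with h | h
    · exact hss h
    · rw [h] at hS; nlinarith [sq_nonneg s2]
  rcases lt_or_gt_of_ne hAs with h | h
  · exact core_pos hμ0 hμ1 hl0 hl1 hS hT h (hiff.mp h) e1 e2
  · have h2 : |t2| < |t1| := by
      have : ¬ |t1| < |t2| := fun hh => absurd (hiff.mpr hh) (not_lt.mpr h.le)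
      rcases lt_or_gt_of_ne (fun he : |t1| = |t2| => by
        rcases abs_eq_abs.mp he with hh | hh
        · exact htt hh
        · rw [hh] at hT; nlinarith [sq_nonneg t2]) with hh | hh
      · exact absurd hh this
      · exact hh
    exact core_pos hl0 hl1 hμ0 hμ1 (by nlinarith) (by nlinarith) h h2 e1.symm e2.symm

/-- Crossing construction core. -/
lemma cross_core {a b c d : ℝ} (hb : 0 < b) (hba : b < a) (hc : 0 < c) (hcd : c < d) :
    ∃ μ lam : ℝ, 0 ≤ μ ∧ μ ≤ 1 ∧ 0 ≤ lam ∧ lam ≤ 1 ∧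
      μ*a = lam*b ∧ (1-μ)*c = (1-lam)*d := by
  have hD : 0 < a*d - b*c := by nlinarith
  refine ⟨b*(d-c)/(a*d-b*c), a*(d-c)/(a*d-b*c), ?_, ?_, ?_, ?_, ?_, ?_⟩
  · exact div_nonneg (by nlinarith) hD.le
  · rw [div_le_one hD]; nlinarith
  · exact div_nonneg (by nlinarith) hD.le
  · rw [div_le_one hD]; nlinarith
  · field_simp
  · rw [div_eq_mul_inv, div_eq_mul_inv]
    linear_combination (d-c) * mul_inv_cancel₀ hD.ne'

/-- Interleaved same-quadrant edges intersect. -/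
lemma seg_cross (x u v : Pt) {s1 t1 s2 t2 : ℝ}
    (hss : s1*s2 > 0) (htt : t1*t2 > 0)
    (hs : |s1| < |s2|) (ht : |t2| < |t1|) :
    (segment ℝ (x + s1 • v) (x + t1 • u) ∩
      segment ℝ (x + s2 • v) (x + t2 • u)).Nonempty := by
  have key : ∃ μ lam : ℝ, 0 ≤ μ ∧ μ ≤ 1 ∧ 0 ≤ lam ∧ lam ≤ 1 ∧
      μ*t1 = lam*t2 ∧ (1-μ)*s1 = (1-lam)*s2 := by
    rcases mul_pos_iff.mp hss with ⟨hsa, hsb⟩ | ⟨hsa, hsb⟩ <;>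
      rcases mul_pos_iff.mp htt with ⟨hta, htb⟩ | ⟨hta, htb⟩
    · -- s pos, t pos
      rw [abs_of_pos hsa, abs_of_pos hsb] at hs
      rw [abs_of_pos hta, abs_of_pos htb] at ht
      obtain ⟨μ, lam, h1, h2, h3, h4, e1, e2⟩ := cross_core htb ht hsa hs
      exact ⟨μ, lam, h1, h2, h3, h4, e1, e2⟩
    · -- s pos, t neg
      rw [abs_of_pos hsa, abs_of_pos hsb] at hs
      rw [abs_of_neg hta, abs_of_neg htb] at ht
      obtain ⟨μ, lam, h1, h2, h3, h4, e1, e2⟩ :=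
        cross_core (a := -t1) (b := -t2) (by linarith) (by linarith) hsa hs
      exact ⟨μ, lam, h1, h2, h3, h4, by linarith [e1], e2⟩
    · -- s neg, t pos
      rw [abs_of_neg hsa, abs_of_neg hsb] at hs
      rw [abs_of_pos hta, abs_of_pos htb] at ht
      obtain ⟨μ, lam, h1, h2, h3, h4, e1, e2⟩ :=
        cross_core (c := -s1) (d := -s2) htb ht (by linarith) (by linarith)
      exact ⟨μ, lam, h1, h2, h3, h4, e1, by linarith [e2]⟩
    · -- s neg, t neg
      rw [abs_of_neg hsa, abs_of_neg hsb] at hs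
      rw [abs_of_neg hta, abs_of_neg htb] at ht
      obtain ⟨μ, lam, h1, h2, h3, h4, e1, e2⟩ :=
        cross_core (a := -t1) (b := -t2) (c := -s1) (d := -s2)
          (by linarith) (by linarith) (by linarith) (by linarith)
      exact ⟨μ, lam, h1, h2, h3, h4, by linarith [e1], by linarith [e2]⟩
  obtain ⟨μ, lam, h1, h2, h3, h4, e1, e2⟩ := key
  refine ⟨x + (μ*t1) • u + ((1-μ)*s1) • v,
    (mem_seg_iff x u v s1 t1 _).mpr ⟨μ, h1, h2, rfl⟩,
    (mem_seg_iff x u v s2 t2 _).mpr ⟨lam, h3, h4, ?_⟩⟩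
  rw [e1, e2]


def puF (x u v : Pt) (p : Pt) : ℝ := det2 (p - x) v / det2 u v
def pvF (x u v : Pt) (p : Pt) : ℝ := det2 u (p - x) / det2 u v

lemma puF_eval (x u v : Pt) (hd : det2 u v ≠ 0) (t s : ℝ) :
    puF x u v (x + t • u + s • v) = t := by
  have h : (x + t • u + s • v) - x = t • u + s • v := by abel
  rw [puF, h]
  simp only [det2, PiLp.add_apply, PiLp.smul_apply, smul_eq_mul] at *
  have hd' : u 0 * v 1 - v 0 * u 1 ≠ 0 := by intro h; apply hd; linarith
  field_simp
  ring

lemma pvF_eval (x u v : Pt) (hd : det2 u v ≠ 0) (t s : ℝ) :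
    pvF x u v (x + t • u + s • v) = s := by
  have h : (x + t • u + s • v) - x = t • u + s • v := by abel
  rw [pvF, h]
  simp only [det2, PiLp.add_apply, PiLp.smul_apply, smul_eq_mul] at *
  field_simp
  ring

lemma puF_blue (x u v : Pt) (hd : det2 u v ≠ 0) (t : ℝ) :
    puF x u v (x + t • u) = t := by
  have := puF_eval x u v hd t 0
  simpa using this

lemma puF_red (x u v : Pt) (hd : det2 u v ≠ 0) (s : ℝ) :
    puF x u v (x + s • v) = 0 := by
  have := puF_eval x u v hd 0 s
  simpa using this

lemma pvF_blue (x u v : Pt) (hd : det2 u v ≠ 0) (t : ℝ) :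
    pvF x u v (x + t • u) = 0 := by
  have := pvF_eval x u v hd t 0
  simpa using this

lemma pvF_red (x u v : Pt) (hd : det2 u v ≠ 0) (s : ℝ) :
    pvF x u v (x + s • v) = s := by
  have := pvF_eval x u v hd 0 s
  simpa using this



lemma det2_swap (u v : Pt) : det2 v u = - det2 u v := by simp [det2]; ring

lemma pvF_swap (x u v : Pt) : pvF x v u = puF x u v := by
  funext p
  rw [pvF, puF, det2_swap v (p - x), det2_swap v u, neg_div_neg_eq]

lemma puF_swap (x u v : Pt) : puF x v u = pvF x u v := by
  funext p
  rw [pvF, puF, det2_swap (p-x) u, det2_swap v u, neg_div_neg_eq]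

lemma inter_openSegment_red (x u v : Pt) (hd : det2 u v ≠ 0) (B R : Finset Pt)
    (hB : ∀ p ∈ B, ∃ t : ℝ, t ≠ 0 ∧ p = x + t • u)
    (hR : ∀ p ∈ R, ∃ t : ℝ, t ≠ 0 ∧ p = x + t • v) :
    (↑B ∪ ↑R : Set Pt) ∩ openSegment ℝ (x + v) x =
      {p : Pt | p ∈ R ∧ 0 < pvF x u v p ∧ pvF x u v p < 1} := by
  ext p
  simp only [Set.mem_inter_iff, Set.mem_union, Set.mem_setOf_eq, Finset.mem_coe]
  constructor
  · rintro ⟨hBR, hseg⟩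
    obtain ⟨a, c, ha, hc, hac, hpe⟩ := hseg
    have hpe' : p = x + a • v := by
      rw [← hpe]
      have hcc : c = 1 - a := by linarith
      rw [hcc]
      match_scalars <;> ring
    rcases hBR with hpB | hpR
    · obtain ⟨t, ht, hbe⟩ := hB p hpB
      have e : x + t • u + (0:ℝ) • v = x + (0:ℝ) • u + a • v := by
        simpa using (hbe.symm.trans hpe')
      exact absurd (param_inj x u v hd e).1 ht
    · obtain ⟨s, hs, hre⟩ := hR p hpR
      have e : x + (0:ℝ) • u + s • v = x + (0:ℝ) • u + a • v := by
        simpa using (hre.symm.trans hpe')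
      have hsa : s = a := (param_inj x u v hd e).2
      have : pvF x u v p = s := by rw [hre]; exact pvF_red x u v hd s
      rw [this, hsa]
      exact ⟨hpR, ha, by linarith⟩
  · rintro ⟨hpR, h0, h1⟩
    obtain ⟨s, hs0, hpe⟩ := hR p hpR
    have hpv : pvF x u v p = s := by rw [hpe]; exact pvF_red x u v hd s
    rw [hpv] at h0 h1
    refine ⟨Or.inr hpR, ⟨s, 1 - s, h0, by linarith, by ring, ?_⟩⟩
    rw [hpe]
    match_scalars <;> ring

lemma inter_ray_blue (x u v : Pt) (hd : det2 u v ≠ 0) (B R : Finset Pt)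
    (hB : ∀ p ∈ B, ∃ t : ℝ, t ≠ 0 ∧ p = x + t • u)
    (hR : ∀ p ∈ R, ∃ t : ℝ, t ≠ 0 ∧ p = x + t • v) :
    (↑B ∪ ↑R : Set Pt) ∩ rayThrough (x + u) x =
      {p : Pt | p ∈ B ∧ puF x u v p < 1} := by
  ext p
  simp only [Set.mem_inter_iff, Set.mem_union, Set.mem_setOf_eq, Finset.mem_coe]
  constructor
  · rintro ⟨hBR, hray⟩
    obtain ⟨w, hw, hpe⟩ := hray
    have hpe' : p = x + (1 - w) • u := by
      rw [hpe]
      match_scalars <;> ring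
    rcases hBR with hpB | hpR
    · obtain ⟨t, ht, hbe⟩ := hB p hpB
      have e : x + t • u + (0:ℝ) • v = x + (1-w) • u + (0:ℝ) • v := by
        simpa using (hbe.symm.trans hpe')
      have htw : t = 1 - w := (param_inj x u v hd e).1
      have : puF x u v p = t := by rw [hbe]; exact puF_blue x u v hd t
      rw [this, htw]
      exact ⟨hpB, by linarith⟩
    · obtain ⟨s, hs, hre⟩ := hR p hpR
      have e : x + (0:ℝ) • u + s • v = x + (1-w) • u + (0:ℝ) • v := by
        simpa using (hre.symm.trans hpe')
      exact absurd (param_inj x u v hd e).2 hs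
  · rintro ⟨hpB, h1⟩
    obtain ⟨t, ht0, hpe⟩ := hB p hpB
    have hpu : puF x u v p = t := by rw [hpe]; exact puF_blue x u v hd t
    rw [hpu] at h1
    refine ⟨Or.inl hpB, ⟨1 - t, by linarith, ?_⟩⟩
    rw [hpe]
    match_scalars <;> ring


end Helpers

theorem aux_criterion (x u v : Pt) (hnp : det2 u v ≠ 0) (B R : Finset Pt)
    (hB : ∀ p ∈ B, ∃ t : ℝ, t ≠ 0 ∧ p = x + t • u)
    (hR : ∀ p ∈ R, ∃ t : ℝ, t ≠ 0 ∧ p = x + t • v)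
    (hcard : B.card = R.card)
    (r b : Pt) (hr : r ∈ R) (hb : b ∈ B)
    (hbe : b = x + u) (hre : r = x + v) :
    BFeasible B R r b ↔
      (((↑B ∪ ↑R : Set Pt) ∩ openSegment ℝ r x).ncard ≤
          ((↑B ∪ ↑R : Set Pt) ∩ rayThrough b x).ncard ∧
        ((↑B ∪ ↑R : Set Pt) ∩ openSegment ℝ b x).ncard ≤
          ((↑B ∪ ↑R : Set Pt) ∩ rayThrough r x).ncard) := by
  classical
  have hd' : det2 v u ≠ 0 := by rw [det2_swap]; exact neg_ne_zero.mpr hnp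
  -- representation of points by their parameters
  have hrepB : ∀ p ∈ B, p = x + (puF x u v p) • u ∧ puF x u v p ≠ 0 := by
    intro p hp
    obtain ⟨t, ht, he⟩ := hB p hp
    have hpt : puF x u v p = t := by rw [he]; exact puF_blue x u v hnp t
    exact ⟨by rw [hpt, ← he], by rw [hpt]; exact ht⟩
  have hrepR : ∀ p ∈ R, p = x + (pvF x u v p) • v ∧ pvF x u v p ≠ 0 := by
    intro p hp
    obtain ⟨t, ht, he⟩ := hR p hp
    have hpt : pvF x u v p = t := by rw [he]; exact pvF_red x u v hnp t
    exact ⟨by rw [hpt, ← he], by rw [hpt]; exact ht⟩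
  have hpub : puF x u v b = 1 := by
    rw [hbe, show x + u = x + (1:ℝ) • u by rw [one_smul]]
    exact puF_blue x u v hnp 1
  have hpvr : pvF x u v r = 1 := by
    rw [hre, show x + v = x + (1:ℝ) • v by rw [one_smul]]
    exact pvF_red x u v hnp 1
  -- the four boundary sets as finsets
  have HA : ((↑B ∪ ↑R : Set Pt) ∩ openSegment ℝ r x).ncard
      = (R.filter (fun p => 0 < pvF x u v p ∧ pvF x u v p < 1)).card := by
    rw [hre, inter_openSegment_red x u v hnp B R hB hR,
      show {p : Pt | p ∈ R ∧ 0 < pvF x u v p ∧ pvF x u v p < 1}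
        = ↑(R.filter (fun p => 0 < pvF x u v p ∧ pvF x u v p < 1)) by ext q; simp]
    exact Set.ncard_coe_finset _
  have HB2 : ((↑B ∪ ↑R : Set Pt) ∩ rayThrough b x).ncard
      = (B.filter (fun p => puF x u v p < 1)).card := by
    rw [hbe, inter_ray_blue x u v hnp B R hB hR,
      show {p : Pt | p ∈ B ∧ puF x u v p < 1}
        = ↑(B.filter (fun p => puF x u v p < 1)) by ext q; simp]
    exact Set.ncard_coe_finset _
  have HC : ((↑B ∪ ↑R : Set Pt) ∩ openSegment ℝ b x).ncard
      = (B.filter (fun p => 0 < puF x u v p ∧ puF x u v p < 1)).card := by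
    rw [hbe, Set.union_comm (↑B : Set Pt) ↑R,
      inter_openSegment_red x v u hd' R B hR hB, pvF_swap,
      show {p : Pt | p ∈ B ∧ 0 < puF x u v p ∧ puF x u v p < 1}
        = ↑(B.filter (fun p => 0 < puF x u v p ∧ puF x u v p < 1)) by ext q; simp]
    exact Set.ncard_coe_finset _
  have HD : ((↑B ∪ ↑R : Set Pt) ∩ rayThrough r x).ncard
      = (R.filter (fun p => pvF x u v p < 1)).card := by
    rw [hre, Set.union_comm (↑B : Set Pt) ↑R,
      inter_ray_blue x v u hd' R B hR hB, puF_swap,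
      show {p : Pt | p ∈ R ∧ pvF x u v p < 1}
        = ↑(R.filter (fun p => pvF x u v p < 1)) by ext q; simp]
    exact Set.ncard_coe_finset _
  rw [HA, HB2, HC, HD]
  constructor
  · -- necessity
    rintro ⟨σ, ⟨hbij, hdisj⟩, hσr⟩
    have hrb : r = x + (1:ℝ) • v := by rw [one_smul, ← hre]
    have hbb : b = x + (1:ℝ) • u := by rw [one_smul, ← hbe]
    constructor
    · -- first inequality, via p ↦ σ p
      apply Finset.card_le_card_of_injOn σ
      · intro p hp
        have hp' := Finset.mem_filter.mp hp
        have hpR := hp'.1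
        have h0 := hp'.2.1
        have h1 := hp'.2.2
        have hσpB : σ p ∈ B := Finset.mem_coe.mp (hbij.mapsTo (Finset.mem_coe.mpr hpR))
        refine Finset.mem_filter.mpr ⟨hσpB, ?_⟩
        by_contra hge
        push_neg at hge
        have hpne : p ≠ r := by
          intro he; rw [he, hpvr] at h1; exact lt_irrefl 1 h1
        rcases eq_or_lt_of_le hge with heq | hlt
        · -- σ p = b forces p = r
          have : σ p = σ r := by
            rw [hσr, (hrepB (σ p) hσpB).1, ← heq, ← hbb]
          exact hpne (hbij.injOn (Finset.mem_coe.mpr hpR) (Finset.mem_coe.mpr hr) this)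
        · -- crossing
          have hcross := seg_cross x u v
            (s1 := pvF x u v p) (t1 := puF x u v (σ p)) (s2 := 1) (t2 := 1)
            (by rw [mul_one]; exact h0) (by rw [mul_one]; linarith)
            (by rw [abs_of_pos h0, abs_one]; exact h1)
            (by rw [abs_one, abs_of_pos (by linarith)]; exact hlt)
          have hdj := hdisj p hpR r hr hpne
          have e1 : segment ℝ p (σ p)
              = segment ℝ (x + pvF x u v p • v) (x + puF x u v (σ p) • u) := by
            rw [← (hrepR p hpR).1, ← (hrepB (σ p) hσpB).1]
          have e2 : segment ℝ r (σ r) = segment ℝ (x + (1:ℝ) • v) (x + (1:ℝ) • u) := by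
            rw [hσr, ← hrb, ← hbb]
          rw [e1, e2] at hdj
          obtain ⟨z, hz⟩ := hcross
          rw [hdj] at hz
          exact hz
      · exact hbij.injOn.mono (by exact_mod_cast Finset.filter_subset _ R)
    · -- second inequality, via q ↦ (chosen preimage of q)
      have hex : ∀ q ∈ B, ∃ p, p ∈ R ∧ σ p = q := by
        intro q hq
        obtain ⟨p, hp, he⟩ := hbij.surjOn (Finset.mem_coe.mpr hq)
        exact ⟨p, Finset.mem_coe.mp hp, he⟩
      set g : Pt → Pt := fun q => if h : ∃ p, p ∈ R ∧ σ p = q then h.choose else q with hgdef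
      have hg : ∀ q ∈ B, g q ∈ R ∧ σ (g q) = q := by
        intro q hq
        have h := hex q hq
        simp only [hgdef, dif_pos h]
        exact h.choose_spec
      apply Finset.card_le_card_of_injOn g
      · intro q hq
        have hq' := Finset.mem_filter.mp hq
        have hqB := hq'.1
        have h0 := hq'.2.1
        have h1 := hq'.2.2
        obtain ⟨hgR, hgσ⟩ := hg q hqB
        refine Finset.mem_filter.mpr ⟨hgR, ?_⟩
        by_contra hge
        push_neg at hge
        have hqne : q ≠ b := by
          intro he; rw [he, hpub] at h1; exact lt_irrefl 1 h1
        have hgne : r ≠ g q := by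
          intro he
          rw [← he] at hgσ
          exact hqne (by rw [← hgσ, hσr])
        rcases eq_or_lt_of_le hge with heq | hlt
        · -- g q = r forces q = b
          have : g q = r := by rw [(hrepR (g q) hgR).1, ← heq, ← hrb]
          exact hgne this.symm
        · -- crossing
          have hcross := seg_cross x u v
            (s1 := 1) (t1 := 1) (s2 := pvF x u v (g q)) (t2 := puF x u v q)
            (by rw [one_mul]; linarith) (by rw [one_mul]; exact h0)
            (by rw [abs_one, abs_of_pos (by linarith)]; exact hlt)
            (by rw [abs_of_pos h0, abs_one]; exact h1)
          have hdj := hdisj r hr (g q) hgR hgne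
          have e1 : segment ℝ r (σ r) = segment ℝ (x + (1:ℝ) • v) (x + (1:ℝ) • u) := by
            rw [hσr, ← hrb, ← hbb]
          have e2 : segment ℝ (g q) (σ (g q))
              = segment ℝ (x + pvF x u v (g q) • v) (x + puF x u v q • u) := by
            rw [hgσ, ← (hrepR (g q) hgR).1, ← (hrepB q hqB).1]
          rw [e1, e2] at hdj
          obtain ⟨z, hz⟩ := hcross
          rw [hdj] at hz
          exact hz
      · intro q1 hq1 q2 hq2 he
        have hb1 := (hg q1 (Finset.mem_filter.mp (Finset.mem_coe.mp hq1)).1).2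
        have hb2 := (hg q2 (Finset.mem_filter.mp (Finset.mem_coe.mp hq2)).1).2
        rw [← hb1, ← hb2, he]
  · -- sufficiency
    rintro ⟨hc1, hc2⟩
    have hpvinj : Set.InjOn (pvF x u v) ↑R := by
      intro p1 h1 p2 h2 he
      rw [(hrepR p1 (Finset.mem_coe.mp h1)).1, (hrepR p2 (Finset.mem_coe.mp h2)).1, he]
    have hpuinj : Set.InjOn (puF x u v) ↑B := by
      intro p1 h1 p2 h2 he
      rw [(hrepB p1 (Finset.mem_coe.mp h1)).1, (hrepB p2 (Finset.mem_coe.mp h2)).1, he]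
    have htrans1 : ((R.image (pvF x u v)).filter (fun a => 0 < a ∧ a < 1)).card
        = (R.filter (fun p => 0 < pvF x u v p ∧ pvF x u v p < 1)).card := by
      rw [Finset.filter_image]
      exact Finset.card_image_of_injOn
        (hpvinj.mono (by exact_mod_cast Finset.filter_subset _ R))
    have htrans2 : ((B.image (puF x u v)).filter (fun a => a < 1)).card
        = (B.filter (fun p => puF x u v p < 1)).card := by
      rw [Finset.filter_image]
      exact Finset.card_image_of_injOn
        (hpuinj.mono (by exact_mod_cast Finset.filter_subset _ B))
    have htrans3 : ((B.image (puF x u v)).filter (fun a => 0 < a ∧ a < 1)).card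
        = (B.filter (fun p => 0 < puF x u v p ∧ puF x u v p < 1)).card := by
      rw [Finset.filter_image]
      exact Finset.card_image_of_injOn
        (hpuinj.mono (by exact_mod_cast Finset.filter_subset _ B))
    have htrans4 : ((R.image (pvF x u v)).filter (fun a => a < 1)).card
        = (R.filter (fun p => pvF x u v p < 1)).card := by
      rw [Finset.filter_image]
      exact Finset.card_image_of_injOn
        (hpvinj.mono (by exact_mod_cast Finset.filter_subset _ R))
    have hS0 : (0:ℝ) ∉ R.image (pvF x u v) := by
      intro h
      obtain ⟨p, hp, he⟩ := Finset.mem_image.mp h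
      exact (hrepR p hp).2 he
    have hT0 : (0:ℝ) ∉ B.image (puF x u v) := by
      intro h
      obtain ⟨p, hp, he⟩ := Finset.mem_image.mp h
      exact (hrepB p hp).2 he
    have hS1 : (1:ℝ) ∈ R.image (pvF x u v) := Finset.mem_image.mpr ⟨r, hr, hpvr⟩
    have hT1 : (1:ℝ) ∈ B.image (puF x u v) := Finset.mem_image.mpr ⟨b, hb, hpub⟩
    have hcards : (B.image (puF x u v)).card = (R.image (pvF x u v)).card := by
      rw [Finset.card_image_of_injOn hpvinj, Finset.card_image_of_injOn hpuinj, hcard]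
    obtain ⟨f, hfbij, hf1, hfnc⟩ := comb (R.image (pvF x u v)).card
      (R.image (pvF x u v)) (B.image (puF x u v)) rfl hcards hS0 hT0 hS1 hT1
      (by rw [htrans1, htrans2]; exact hc1)
      (by rw [htrans3, htrans4]; exact hc2)
    refine ⟨fun p => x + (f (pvF x u v p)) • u, ⟨⟨?_, ?_, ?_⟩, ?_⟩, ?_⟩
    · -- mapsTo
      intro p hp
      have hpR := Finset.mem_coe.mp hp
      have hmem : f (pvF x u v p) ∈ B.image (puF x u v) :=
        Finset.mem_coe.mp (hfbij.mapsTo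
          (Finset.mem_coe.mpr (Finset.mem_image.mpr ⟨p, hpR, rfl⟩)))
      obtain ⟨q, hqB, hq⟩ := Finset.mem_image.mp hmem
      have heq : x + (f (pvF x u v p)) • u = q := by
        rw [← hq]
        exact ((hrepB q hqB).1).symm
      show x + (f (pvF x u v p)) • u ∈ (↑B : Set Pt)
      rw [heq]
      exact Finset.mem_coe.mpr hqB
    · -- injOn
      intro p1 h1 p2 h2 he
      have e : x + (f (pvF x u v p1)) • u + (0:ℝ) • v
          = x + (f (pvF x u v p2)) • u + (0:ℝ) • v := by
        simpa using he
      have hf12 : f (pvF x u v p1) = f (pvF x u v p2) := (param_inj x u v hnp e).1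
      have hpv : pvF x u v p1 = pvF x u v p2 :=
        hfbij.injOn
          (Finset.mem_coe.mpr (Finset.mem_image.mpr ⟨p1, Finset.mem_coe.mp h1, rfl⟩))
          (Finset.mem_coe.mpr (Finset.mem_image.mpr ⟨p2, Finset.mem_coe.mp h2, rfl⟩))
          hf12
      exact hpvinj h1 h2 hpv
    · -- surjOn
      intro q hq
      have hqB := Finset.mem_coe.mp hq
      have hmem : puF x u v q ∈ B.image (puF x u v) :=
        Finset.mem_image.mpr ⟨q, hqB, rfl⟩
      obtain ⟨a, haS, hfa⟩ := hfbij.surjOn (Finset.mem_coe.mpr hmem)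
      obtain ⟨p, hpR, hpva⟩ := Finset.mem_image.mp (Finset.mem_coe.mp haS)
      refine ⟨p, Finset.mem_coe.mpr hpR, ?_⟩
      show x + (f (pvF x u v p)) • u = q
      rw [hpva, hfa]
      exact ((hrepB q hqB).1).symm
    · -- non-crossing
      intro p1 hp1 p2 hp2 hne
      have hm1 : pvF x u v p1 ∈ R.image (pvF x u v) := Finset.mem_image.mpr ⟨p1, hp1, rfl⟩
      have hm2 : pvF x u v p2 ∈ R.image (pvF x u v) := Finset.mem_image.mpr ⟨p2, hp2, rfl⟩
      have hfm1 : f (pvF x u v p1) ∈ B.image (puF x u v) :=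
        Finset.mem_coe.mp (hfbij.mapsTo (Finset.mem_coe.mpr hm1))
      have hfm2 : f (pvF x u v p2) ∈ B.image (puF x u v) :=
        Finset.mem_coe.mp (hfbij.mapsTo (Finset.mem_coe.mpr hm2))
      have hss : pvF x u v p1 ≠ pvF x u v p2 := fun he =>
        hne (hpvinj (Finset.mem_coe.mpr hp1) (Finset.mem_coe.mpr hp2) he)
      have htt : f (pvF x u v p1) ≠ f (pvF x u v p2) := fun he =>
        hss (hfbij.injOn (Finset.mem_coe.mpr hm1) (Finset.mem_coe.mpr hm2) he)
      have key := seg_disjoint x u v hnp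
        (s1 := pvF x u v p1) (t1 := f (pvF x u v p1))
        (s2 := pvF x u v p2) (t2 := f (pvF x u v p2))
        (hrepR p1 hp1).2 (hrepR p2 hp2).2
        (ne_of_mem_of_not_mem hfm1 hT0) (ne_of_mem_of_not_mem hfm2 hT0)
        hss htt (hfnc (pvF x u v p1) hm1 (pvF x u v p2) hm2 hss)
      rw [← (hrepR p1 hp1).1, ← (hrepR p2 hp2).1] at key
      exact key
    · -- contains the edge (r, b)
      show x + (f (pvF x u v r)) • u = b
      rw [hpvr, hf1, one_smul]
      exact hbe.symm

lemma det2_smul_smul (u v : Pt) (a c : ℝ) :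
    det2 (a • u) (c • v) = a * c * det2 u v := by
  simp only [det2, PiLp.smul_apply, smul_eq_mul]
  ring


/-- Let `P = B ∪ R` be a doubly collinear point set (blue points on the line
through `x` with direction `u`, red points on the line through `x` with direction `v`, the two
lines being non-parallel), with `|B| = |R| = n`. An edge `{r, b}` is feasible iff
`|P ∩ (r,x)| ≤ |P ∩ (b→x→)|` and `|P ∩ (b,x)| ≤ |P ∩ (r→x→)|`. -/
theorem dc_feasibility_criterion (n : ℕ) (x u v : Pt) (hu : u ≠ 0) (hv : v ≠ 0)
    (hnp : det2 u v ≠ 0) (B R : Finset Pt)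
    (hB : ∀ b ∈ B, ∃ t : ℝ, t ≠ 0 ∧ b = x + t • u)
    (hR : ∀ r ∈ R, ∃ t : ℝ, t ≠ 0 ∧ r = x + t • v)
    (hcB : B.card = n) (hcR : R.card = n)
    (r b : Pt) (hr : r ∈ R) (hb : b ∈ B) :
    BFeasible B R r b ↔
      (((↑B ∪ ↑R : Set Pt) ∩ openSegment ℝ r x).ncard ≤
          ((↑B ∪ ↑R : Set Pt) ∩ rayThrough b x).ncard ∧
        ((↑B ∪ ↑R : Set Pt) ∩ openSegment ℝ b x).ncard ≤
          ((↑B ∪ ↑R : Set Pt) ∩ rayThrough r x).ncard) := by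
  obtain ⟨tb, htb, hbe⟩ := hB b hb
  obtain ⟨sr, hsr, hre⟩ := hR r hr
  have hd2 : det2 (tb • u) (sr • v) ≠ 0 := by
    rw [det2_smul_smul]
    exact mul_ne_zero (mul_ne_zero htb hsr) hnp
  refine aux_criterion x (tb • u) (sr • v) hd2 B R ?_ ?_ (hcB.trans hcR.symm) r b hr hb
    hbe hre
  · intro p hp
    obtain ⟨t, ht, he⟩ := hB p hp
    exact ⟨t/tb, div_ne_zero ht htb, by rw [he, smul_smul, div_mul_cancel₀ t htb]⟩
  · intro p hp
    obtain ⟨t, ht, he⟩ := hR p hp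
    exact ⟨t/sr, div_ne_zero ht hsr, by rw [he, smul_smul, div_mul_cancel₀ t hsr]⟩
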